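/- Let c solve c'(t) = −(4/ξ)(K H' c(t) − k_B θ I) along a trajectory with no deformation (L = 0), c(t) symmetric positive definite. Then the free energy F(c) = K H' tr(c) − k_B θ log det(c) is nonincreasing; precisely d/dt F(c(t)) = −(4/ξ) trace((KH' c − k_Bθ I) c⁻¹ (KH' c − k_Bθ I)) ≤ 0. -/

import Mathlib

open Matrix

attribute [local instance] Matrix.normedAddCommGroup Matrix.normedSpace

/-- The determinant as a continuous multilinear map in the rows. -/
noncomputable def detCM (d : ℕ) : ContinuousMultilinearMap ℝ (fun _ : Fin d => Fin d → ℝ) ℝ :=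
  (Matrix.detRowAlternating (n := Fin d) (R := ℝ)).toMultilinearMap.mkContinuous
    (Nat.factorial d) (by
      intro m
      have hdm : (Matrix.detRowAlternating (n := Fin d) (R := ℝ)).toMultilinearMap m
          = Matrix.det (Matrix.of m) := rfl
      rw [hdm, Matrix.det_apply]
      calc ‖∑ σ : Equiv.Perm (Fin d), Equiv.Perm.sign σ • ∏ i, Matrix.of m (σ i) i‖
          ≤ ∑ σ : Equiv.Perm (Fin d), ‖Equiv.Perm.sign σ • ∏ i, Matrix.of m (σ i) i‖ :=
            norm_sum_le _ _
        _ ≤ ∑ _σ : Equiv.Perm (Fin d), ∏ i, ‖m i‖ := by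
            refine Finset.sum_le_sum fun σ _ => ?_
            have h1 : ‖Equiv.Perm.sign σ • ∏ i, Matrix.of m (σ i) i‖
                = ‖∏ i, Matrix.of m (σ i) i‖ := by
              rcases Int.units_eq_one_or (Equiv.Perm.sign σ) with h | h <;> simp [h]
            rw [h1]
            calc ‖∏ i, Matrix.of m (σ i) i‖ = ∏ i, ‖m (σ i) i‖ := by
                  simp [Real.norm_eq_abs, Finset.abs_prod, Matrix.of_apply]
              _ ≤ ∏ i, ‖m (σ i)‖ := by
                  refine Finset.prod_le_prod (fun i _ => norm_nonneg _) fun i _ => ?_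
                  exact norm_le_pi_norm (m (σ i)) i
              _ = ∏ i, ‖m i‖ := Equiv.prod_comp σ fun j => ‖m j‖
        _ = (Nat.factorial d) * ∏ i, ‖m i‖ := by
            rw [Finset.sum_const, Finset.card_univ, Fintype.card_perm, Fintype.card_fin,
              nsmul_eq_mul])

lemma sum_det_updateRow {d : ℕ} (M X : Matrix (Fin d) (Fin d) ℝ) :
    ∑ i, (M.updateRow i (X i)).det = (Matrix.adjugate M * X).trace := by
  have h : ∀ i, (M.updateRow i (X i)).det = ∑ j, X i j * Matrix.adjugate M j i := by
    intro i
    rw [← Matrix.cramer_transpose_apply]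
    have hX : X i = ∑ j, X i j • (Pi.single j (1 : ℝ) : Fin d → ℝ) := by
      ext k
      simp [Pi.single_apply, eq_comm]
    conv_lhs => rw [hX]
    rw [map_sum, Finset.sum_apply]
    refine Finset.sum_congr rfl fun j _ => ?_
    rw [_root_.map_smul]
    simp [Matrix.adjugate_apply, Matrix.cramer_transpose_apply, smul_eq_mul]
  simp_rw [h]
  rw [Finset.sum_comm, Matrix.trace]
  refine Finset.sum_congr rfl fun j _ => ?_
  simp [Matrix.diag, Matrix.mul_apply, mul_comm]

lemma hasDerivAt_trace_matrix {d : ℕ} {c : ℝ → Matrix (Fin d) (Fin d) ℝ}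
    {c' : Matrix (Fin d) (Fin d) ℝ} {t : ℝ} (hc : HasDerivAt c c' t) :
    HasDerivAt (fun s => (c s).trace) c'.trace t := by
  have h : ∀ i : Fin d, HasDerivAt (fun s => c s i i) (c' i i) t := fun i =>
    (hasDerivAt_pi.1 (hasDerivAt_pi.1 hc i)) i
  simpa [Matrix.trace, Matrix.diag] using HasDerivAt.fun_sum (fun i (_ : i ∈ Finset.univ) => h i)

lemma hasDerivAt_det_matrix {d : ℕ} {c : ℝ → Matrix (Fin d) (Fin d) ℝ}
    {c' : Matrix (Fin d) (Fin d) ℝ} {t : ℝ} (hc : HasDerivAt c c' t) :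
    HasDerivAt (fun s => (c s).det) ((Matrix.adjugate (c t) * c').trace) t := by
  have hrows : ∀ i : Fin d, HasFDerivAt (fun s => c s i)
      ((1 : ℝ →L[ℝ] ℝ).smulRight (c' i)) t := fun i =>
    ((hasDerivAt_pi.1 hc) i).hasFDerivAt
  have H := HasFDerivAt.multilinear_comp (detCM d) hrows
  have Heq : (fun x => detCM d fun i => c x i) = fun s => (c s).det := rfl
  rw [Heq] at H
  have H2 := H.hasDerivAt
  have hval : (∑ i : Fin d, ((detCM d).toContinuousLinearMap (fun j => c t j) i).comp
      ((1 : ℝ →L[ℝ] ℝ).smulRight (c' i))) (1 : ℝ)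
      = (Matrix.adjugate (c t) * c').trace := by
    rw [ContinuousLinearMap.sum_apply]
    have : ∀ i : Fin d, (((detCM d).toContinuousLinearMap (fun j => c t j) i).comp
        ((1 : ℝ →L[ℝ] ℝ).smulRight (c' i))) (1 : ℝ)
        = ((c t).updateRow i (c' i)).det := by
      intro i
      simp only [ContinuousLinearMap.comp_apply, ContinuousLinearMap.smulRight_apply,
        ContinuousLinearMap.one_apply, one_smul]
      rfl
    simp_rw [this]
    exact sum_det_updateRow (c t) c'
  rwa [hval] at H2

lemma trace_nonneg_of_posSemidef {d : ℕ} {B : Matrix (Fin d) (Fin d) ℝ}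
    (h : B.PosSemidef) : 0 ≤ B.trace := by
  rw [Matrix.trace]
  refine Finset.sum_nonneg fun i _ => ?_
  exact h.diag_nonneg

/-- Dissipation identity in the quiescent case: if `c` solves
`c' = −(4/ξ)(KH' c − k_Bθ 1)` with symmetric positive definite values, then the free
energy `F(c) = KH' tr c − k_Bθ log det c` is nonincreasing; precisely
`d/dt F(c t) = −(4/ξ) tr((KH' c − k_Bθ 1) c⁻¹ (KH' c − k_Bθ 1)) ≤ 0`. -/
theorem stmt_14 {d : ℕ} (KH kB ξ : ℝ) (hKH : 0 < KH) (hkB : 0 < kB) (hξ : 0 < ξ)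
    (c : ℝ → Matrix (Fin d) (Fin d) ℝ) (hcpos : ∀ s, (c s).PosDef)
    (hc : ∀ s, HasDerivAt c
      (-((4 / ξ) • (KH • c s - kB • (1 : Matrix (Fin d) (Fin d) ℝ)))) s)
    (t : ℝ) :
    HasDerivAt (fun s => KH * (c s).trace - kB * Real.log (c s).det)
      (-(4 / ξ) * ((KH • c t - kB • (1 : Matrix (Fin d) (Fin d) ℝ)) * (c t)⁻¹ *
        (KH • c t - kB • (1 : Matrix (Fin d) (Fin d) ℝ))).trace) t ∧
    -(4 / ξ) * ((KH • c t - kB • (1 : Matrix (Fin d) (Fin d) ℝ)) * (c t)⁻¹ *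
        (KH • c t - kB • (1 : Matrix (Fin d) (Fin d) ℝ))).trace ≤ 0 := by
  set M := c t with hM
  set A : Matrix (Fin d) (Fin d) ℝ := KH • M - kB • 1 with hA
  set cp : Matrix (Fin d) (Fin d) ℝ := -((4 / ξ) • A) with hcp
  have hDpos : 0 < M.det := (hcpos t).det_pos
  have hD : M.det ≠ 0 := ne_of_gt hDpos
  have hct : HasDerivAt c cp t := hc t
  have htr : HasDerivAt (fun s => (c s).trace) cp.trace t := hasDerivAt_trace_matrix hct
  have hdet : HasDerivAt (fun s => (c s).det) ((Matrix.adjugate M * cp).trace) t :=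
    hasDerivAt_det_matrix hct
  have hlog : HasDerivAt (fun s => Real.log (c s).det)
      ((Matrix.adjugate M * cp).trace / M.det) t := hdet.log hD
  have hF := (htr.const_mul KH).sub (hlog.const_mul kB)
  -- Algebraic identities
  have hMMinv : M * M⁻¹ = 1 := Matrix.mul_nonsing_inv M (isUnit_iff_ne_zero.2 hD)
  have hadj : Matrix.adjugate M = M.det • M⁻¹ := by
    rw [Matrix.inv_def, Ring.inverse_eq_inv', smul_smul, mul_inv_cancel₀ hD, one_smul]
  have hexp : A * M⁻¹ * A = KH • A - kB • (M⁻¹ * A) := by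
    have h1 : (KH • M - kB • (1 : Matrix (Fin d) (Fin d) ℝ)) * M⁻¹
        = KH • (1 : Matrix (Fin d) (Fin d) ℝ) - kB • M⁻¹ := by
      rw [Matrix.sub_mul, Matrix.smul_mul, Matrix.smul_mul, hMMinv, Matrix.one_mul]
    rw [hA, h1, Matrix.sub_mul, Matrix.smul_mul, Matrix.smul_mul, Matrix.one_mul]
  have htrRHS : (A * M⁻¹ * A).trace = KH * A.trace - kB * (M⁻¹ * A).trace := by
    rw [hexp, Matrix.trace_sub, Matrix.trace_smul, Matrix.trace_smul, smul_eq_mul, smul_eq_mul]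
  have hadjtr : (Matrix.adjugate M * cp).trace = M.det * (M⁻¹ * cp).trace := by
    rw [hadj, Matrix.smul_mul, Matrix.trace_smul, smul_eq_mul]
  have hcptr : cp.trace = -(4 / ξ) * A.trace := by
    rw [hcp, Matrix.trace_neg, Matrix.trace_smul, smul_eq_mul]
    ring
  have hMcp : (M⁻¹ * cp).trace = -(4 / ξ) * (M⁻¹ * A).trace := by
    rw [hcp]
    rw [show M⁻¹ * -((4 / ξ) • A) = -((4 / ξ) • (M⁻¹ * A)) by
      rw [Matrix.mul_neg, Matrix.mul_smul]]
    rw [Matrix.trace_neg, Matrix.trace_smul, smul_eq_mul]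
    ring
  have hval : KH * cp.trace - kB * ((Matrix.adjugate M * cp).trace / M.det)
      = -(4 / ξ) * (A * M⁻¹ * A).trace := by
    rw [hadjtr, hcptr, hMcp, htrRHS]
    field_simp
    ring
  constructor
  · rw [← hval]
    exact hF
  · have hAH : Aᴴ = A := by
      rw [hA]
      have hMh : Mᴴ = M := (hcpos t).1
      have hMt : Mᵀ = M := by simpa [Matrix.conjTranspose_eq_transpose_of_trivial] using hMh
      simp [Matrix.conjTranspose_sub, Matrix.conjTranspose_smul, hMh, hMt]
    have hPSD : (Aᴴ * M⁻¹ * A).PosSemidef :=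
      ((hcpos t).inv.posSemidef).conjTranspose_mul_mul_same A
    rw [hAH] at hPSD
    have htrnn : 0 ≤ (A * M⁻¹ * A).trace := trace_nonneg_of_posSemidef hPSD
    have h4 : -(4 / ξ) ≤ 0 := by
      have : 0 < 4 / ξ := by positivity
      linarith
    exact mul_nonpos_of_nonpos_of_nonneg h4 htrnn
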